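/- Normal form under simultaneous conjugation: let n ≥ 2, let b₁ < b₂ < … < b_n be real numbers, B = diag(b₁,…,b_n), and let A ∈ Mat_n(ℝ) satisfy A_{ij} ≠ 0 for all i ≠ j. Then there exists an invertible diagonal matrix g ∈ GL(n,ℝ) such that A' = gAg⁻¹ satisfies A'_{i+1,i} > 0 and A'_{i,i+1} = ε_i A'_{i+1,i} for all i = 1,…,n−1, where ε_i = +1 if A_{i,i+1} A_{i+1,i} > 0 and ε_i = −1 if A_{i,i+1} A_{i+1,i} < 0. Moreover the resulting matrix A' is unique: if g, g' are two invertible diagonal matrices such that both gAg⁻¹ and g'Ag'⁻¹ satisfy these conditions, then gAg⁻¹ = g'Ag'⁻¹. -/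

import Mathlib

/- STATEMENT 9: normal form under simultaneous conjugation. If n ≥ 2,
B = diag(b₁,…,b_n) with b₁ < … < b_n, and A has all off-diagonal entries
nonzero, then there is an invertible diagonal matrix g such that A' = gAg⁻¹
satisfies A'_{i+1,i} > 0 and A'_{i,i+1} = ε_i A'_{i+1,i} for i = 1,…,n−1,
where ε_i = +1 if A_{i,i+1}A_{i+1,i} > 0 and ε_i = −1 if A_{i,i+1}A_{i+1,i} < 0;
moreover A' is unique. -/

/-- The space of real n×n matrices. -/
abbrev Mat (n : ℕ) := Matrix (Fin n) (Fin n) ℝ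

/-- Conjugation by the invertible diagonal matrix g = diag(d):  g A g⁻¹. -/
noncomputable def dconj {n : ℕ} (d : Fin n → ℝ) (A : Mat n) : Mat n :=
  Matrix.diagonal d * A * Matrix.diagonal (fun i => (d i)⁻¹)

/-- The normal-form conditions for A' relative to A:  A'_{i+1,i} > 0 and
A'_{i,i+1} = ε_i A'_{i+1,i}, with ε_i = +1 if A_{i,i+1}A_{i+1,i} > 0 and
ε_i = −1 otherwise (indices 0-based: i ranges over 0,…,n−2). -/
def IsNormalForm {n : ℕ} (A A' : Mat n) : Prop :=
  ∀ i : ℕ, (h : i + 1 < n) →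
    0 < A' ⟨i + 1, h⟩ ⟨i, by omega⟩ ∧
    A' ⟨i, by omega⟩ ⟨i + 1, h⟩ =
      (if 0 < A ⟨i, by omega⟩ ⟨i + 1, h⟩ * A ⟨i + 1, h⟩ ⟨i, by omega⟩
        then (1 : ℝ) else -1) * A' ⟨i + 1, h⟩ ⟨i, by omega⟩

lemma scalar_key {p q t : ℝ} (hp : p ≠ 0) (hq : q ≠ 0) :
    (0 < t * q ∧ p * t⁻¹ = (if 0 < p * q then (1:ℝ) else -1) * (t * q)) ↔
    t = (if 0 < q then (1:ℝ) else -1) * Real.sqrt |p / q| := by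
  have hpq : p / q ≠ 0 := div_ne_zero hp hq
  have hsq : 0 < Real.sqrt |p / q| := Real.sqrt_pos.2 (abs_pos.2 hpq)
  set e : ℝ := if 0 < p * q then (1:ℝ) else -1 with he
  have he2 : e * e = 1 := by by_cases h : 0 < p * q <;> simp [he, h]
  have hcase : e * (p / q) = |p / q| := by
    by_cases h : 0 < p * q
    · rw [he, if_pos h, one_mul, abs_of_pos]
      rw [div_pos_iff]
      rcases mul_pos_iff.1 h with ⟨h1,h2⟩|⟨h1,h2⟩
      · exact Or.inl ⟨h1, h2⟩
      · exact Or.inr ⟨h1, h2⟩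
    · have h' : p * q < 0 := (mul_ne_zero hp hq).lt_or_gt.resolve_right h
      rw [he, if_neg h, abs_of_neg, neg_one_mul]
      rw [div_neg_iff]
      rcases mul_neg_iff.1 h' with ⟨h1,h2⟩|⟨h1,h2⟩
      · exact Or.inl ⟨h1, h2⟩
      · exact Or.inr ⟨h1, h2⟩
  constructor
  · rintro ⟨h1, h2⟩
    have ht : t ≠ 0 := fun h0 => by simp [h0] at h1
    have h2' : p = e * (t ^ 2 * q) := by
      have := congrArg (· * t) h2
      rw [mul_assoc, inv_mul_cancel₀ ht, mul_one] at this
      rw [this]; ring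
    have htsq : t ^ 2 = |p / q| := by
      rw [← hcase, h2']
      field_simp
      rw [← he2]; ring
    have habs : |t| = Real.sqrt |p / q| := by
      rw [← htsq, Real.sqrt_sq_eq_abs]
    rw [← habs]
    by_cases hq0 : 0 < q
    · have ht0 : 0 < t := by nlinarith
      rw [if_pos hq0, one_mul, abs_of_pos ht0]
    · have hq0' : q < 0 := hq.lt_or_gt.resolve_right hq0
      have ht0 : t < 0 := by nlinarith
      rw [if_neg hq0, abs_of_neg ht0]; ring
  · intro h
    have habs : |t| = Real.sqrt |p / q| := by
      rw [h]; by_cases hq0 : 0 < q <;> simp [hq0, abs_of_pos hsq]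
    have htsq : t ^ 2 = |p / q| := by
      rw [← sq_abs, habs, Real.sq_sqrt (abs_nonneg _)]
    have ht0 : t ≠ 0 := fun h0 => by rw [h0] at htsq; simp at htsq; exact hpq (abs_eq_zero.1 htsq.symm)
    have h1 : 0 < t * q := by
      rw [h]
      by_cases hq0 : 0 < q
      · rw [if_pos hq0, one_mul]; positivity
      · have hq0' : q < 0 := hq.lt_or_gt.resolve_right hq0
        rw [if_neg hq0]; nlinarith
    refine ⟨h1, ?_⟩
    have key : p = e * (t ^ 2 * q) := by
      rw [htsq, ← hcase,
        show e * (e * (p / q) * q) = (e * e) * (p / q * q) by ring, he2, one_mul,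
        div_mul_cancel₀ _ hq]
    rw [key]; field_simp

lemma dconj_apply {n : ℕ} (d : Fin n → ℝ) (A : Mat n) (i j : Fin n) :
    dconj d A i j = d i * A i j * (d j)⁻¹ := by
  simp [dconj, Matrix.diagonal_mul, Matrix.mul_diagonal]

/-- the canonical ratio -/
noncomputable def rat {n : ℕ} (A : Mat n) (i : ℕ) : ℝ :=
  if h : i + 1 < n then
    (if 0 < A ⟨i + 1, h⟩ ⟨i, by omega⟩ then (1:ℝ) else -1) *
      Real.sqrt |A ⟨i, by omega⟩ ⟨i + 1, h⟩ / A ⟨i + 1, h⟩ ⟨i, by omega⟩|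
  else 1

lemma nf_iff {n : ℕ} (A : Mat n) (hA : ∀ i j : Fin n, i ≠ j → A i j ≠ 0)
    (d : Fin n → ℝ) (hd : ∀ i, d i ≠ 0) :
    IsNormalForm A (dconj d A) ↔
    ∀ i : ℕ, (h : i + 1 < n) → d ⟨i + 1, h⟩ * (d ⟨i, by omega⟩)⁻¹ = rat A i := by
  unfold IsNormalForm
  refine forall_congr' fun i => forall_congr' fun h => ?_
  set i1 : Fin n := ⟨i + 1, h⟩
  set i0 : Fin n := ⟨i, by omega⟩
  have hne : i0 ≠ i1 := by simp [i0, i1, Fin.ext_iff]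
  have hp : A i0 i1 ≠ 0 := hA _ _ hne
  have hq : A i1 i0 ≠ 0 := hA _ _ hne.symm
  have h1 : dconj d A i1 i0 = (d i1 * (d i0)⁻¹) * A i1 i0 := by
    rw [dconj_apply]; ring
  have h2 : dconj d A i0 i1 = A i0 i1 * (d i1 * (d i0)⁻¹)⁻¹ := by
    rw [dconj_apply, mul_inv, inv_inv]; ring
  rw [h1, h2, rat, dif_pos h]
  exact scalar_key hp hq

theorem normal_form_under_diagonal_conjugation (n : ℕ) (hn : 2 ≤ n)
    (b : Fin n → ℝ) (hb : StrictMono b) (B : Mat n) (hB : B = Matrix.diagonal b)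
    (A : Mat n) (hA : ∀ i j : Fin n, i ≠ j → A i j ≠ 0) :
    (∃ d : Fin n → ℝ, (∀ i, d i ≠ 0) ∧ IsNormalForm A (dconj d A)) ∧
    (∀ d d' : Fin n → ℝ, (∀ i, d i ≠ 0) → (∀ i, d' i ≠ 0) →
      IsNormalForm A (dconj d A) → IsNormalForm A (dconj d' A) →
      dconj d A = dconj d' A) := by
  have hrat : ∀ i : ℕ, rat A i ≠ 0 := by
    intro i
    rw [rat]
    split
    · rename_i h
      have hne : (⟨i, by omega⟩ : Fin n) ≠ ⟨i + 1, h⟩ := by simp [Fin.ext_iff]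
      have hp : A ⟨i, by omega⟩ ⟨i + 1, h⟩ ≠ 0 := hA _ _ hne
      have hq : A ⟨i + 1, h⟩ ⟨i, by omega⟩ ≠ 0 := hA _ _ hne.symm
      have : Real.sqrt |A ⟨i, by omega⟩ ⟨i+1, h⟩ / A ⟨i+1, h⟩ ⟨i, by omega⟩| > 0 :=
        Real.sqrt_pos.2 (abs_pos.2 (div_ne_zero hp hq))
      split <;> [positivity; · intro hc; nlinarith [hc]]
    · exact one_ne_zero
  constructor
  · -- existence
    set f : ℕ → ℝ := fun k => Nat.rec (1:ℝ) (fun k fk => rat A k * fk) k with hf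
    have hf0 : ∀ k, f k ≠ 0 := by
      intro k; induction k with
      | zero => simp [hf]
      | succ k ih => exact mul_ne_zero (hrat k) ih
    refine ⟨fun i => f i.1, fun i => hf0 i.1, ?_⟩
    rw [nf_iff A hA _ (fun i => hf0 i.1)]
    intro i h
    show f (i + 1) * (f i)⁻¹ = rat A i
    rw [show f (i+1) = rat A i * f i from rfl, mul_assoc, mul_inv_cancel₀ (hf0 i), mul_one]
  · -- uniqueness
    intro d d' hd hd' h1 h2
    rw [nf_iff A hA d hd] at h1
    rw [nf_iff A hA d' hd'] at h2
    have h0n : 0 < n := by omega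
    set c : ℝ := d' ⟨0, h0n⟩ * (d ⟨0, h0n⟩)⁻¹ with hc
    have hcne : c ≠ 0 := mul_ne_zero (hd' _) (inv_ne_zero (hd _))
    have hall : ∀ i : ℕ, (h : i < n) → d' ⟨i, h⟩ = c * d ⟨i, h⟩ := by
      intro i
      induction i with
      | zero => intro h; rw [hc, mul_assoc, inv_mul_cancel₀ (hd _), mul_one]
      | succ i ih =>
        intro h
        have hi : i < n := by omega
        have key : d' ⟨i+1, h⟩ * (d' ⟨i, hi⟩)⁻¹ = d ⟨i+1, h⟩ * (d ⟨i, hi⟩)⁻¹ := by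
          rw [h1 i h, h2 i h]
        have := congrArg (· * d' ⟨i, hi⟩) key
        rw [mul_assoc, inv_mul_cancel₀ (hd' _), mul_one, ih hi] at this
        rw [this, show d ⟨i+1, h⟩ * (d ⟨i, hi⟩)⁻¹ * (c * d ⟨i, hi⟩)
            = c * d ⟨i+1, h⟩ * ((d ⟨i, hi⟩)⁻¹ * d ⟨i, hi⟩) from by ring,
          inv_mul_cancel₀ (hd _), mul_one]
    funext i j
    have e1 := hall i.1 i.2
    have e2 := hall j.1 j.2
    simp only [Fin.eta] at e1 e2
    rw [dconj_apply, dconj_apply, e1, e2,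
      show c * d i * A i j * (c * d j)⁻¹
        = (c * c⁻¹) * (d i * A i j * (d j)⁻¹) from by rw [mul_inv]; ring,
      mul_inv_cancel₀ hcne, one_mul]
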